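/- For every n-tuple (a_1, ..., a_n) ∈ ℤ^n there exists a unique function f : ℤ × {1,...,n} → ℤ satisfying the tropical frieze rule f(i,j) + f(i+1,j) = max(f(i+1,j-1) + f(i,j+1), 0) (with zero boundary convention) and f(0, j) = a_j for 1 ≤ j ≤ n. Hence tropical friezes of type A_n are in bijection with ℤ^n. -/

import Mathlib

namespace TropFriezeAux

/-- forward step: compute column `i+1` from column `i`. -/
def nextCol (n : ℕ) (c : ℕ → ℤ) : ℕ → ℤ
  | 0 => 0
  | j+1 => if j+1 ≤ n then max (nextCol n c j + c (j+2)) 0 - c (j+1) else 0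

/-- backward step, auxiliary: `prevAux n c k` is the value at row `n+1-k`. -/
def prevAux (n : ℕ) (c : ℕ → ℤ) : ℕ → ℤ
  | 0 => 0
  | k+1 => if n - k = 0 then 0 else max (c (n-k-1) + prevAux n c k) 0 - c (n-k)

/-- backward step: compute column `i` from column `i+1`. -/
def prevCol (n : ℕ) (c : ℕ → ℤ) (j : ℕ) : ℤ :=
  if j ≤ n+1 then prevAux n c (n+1-j) else 0

lemma nextCol_zero (n : ℕ) (c : ℕ → ℤ) : nextCol n c 0 = 0 := rfl

lemma nextCol_top (n : ℕ) (c : ℕ → ℤ) : nextCol n c (n+1) = 0 := by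
  simp [nextCol]

lemma prevCol_zero (n : ℕ) (c : ℕ → ℤ) : prevCol n c 0 = 0 := by
  simp [prevCol, prevAux]

lemma prevCol_top (n : ℕ) (c : ℕ → ℤ) : prevCol n c (n+1) = 0 := by
  simp [prevCol, prevAux]

lemma next_rec (n : ℕ) (c : ℕ → ℤ) (j : ℕ) (h1 : 1 ≤ j) (h2 : j ≤ n) :
    c j + nextCol n c j = max (nextCol n c (j-1) + c (j+1)) 0 := by
  obtain ⟨k, rfl⟩ : ∃ k, j = k+1 := ⟨j-1, by omega⟩
  simp only [nextCol, if_pos h2, Nat.add_sub_cancel]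
  ring

lemma prev_rec (n : ℕ) (c : ℕ → ℤ) (j : ℕ) (h1 : 1 ≤ j) (h2 : j ≤ n) :
    prevCol n c j + c j = max (c (j-1) + prevCol n c (j+1)) 0 := by
  have e1 : n+1-j = (n-j)+1 := by omega
  rw [prevCol, prevCol, if_pos (by omega : j ≤ n+1), if_pos (by omega : j+1 ≤ n+1), e1]
  have e2 : n+1-(j+1) = n-j := by omega
  rw [e2]
  simp only [prevAux]
  rw [if_neg (by omega : ¬ (n - (n-j) = 0))]
  have e3 : n - (n - j) = j := by omega
  rw [e3]
  ring

/-- the whole frieze as a function of the column index. -/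
def col (n : ℕ) (c0 : ℕ → ℤ) : ℤ → ℕ → ℤ
  | Int.ofNat m => (nextCol n)^[m] c0
  | Int.negSucc m => (prevCol n)^[m+1] c0

lemma col_ofNat_succ (n : ℕ) (c0 : ℕ → ℤ) (m : ℕ) :
    col n c0 (Int.ofNat (m+1)) = nextCol n (col n c0 (Int.ofNat m)) := by
  show (nextCol n)^[m+1] c0 = _
  rw [Function.iterate_succ_apply']
  rfl

lemma col_negSucc (n : ℕ) (c0 : ℕ → ℤ) (m : ℕ) :
    col n c0 (Int.negSucc m) = prevCol n (col n c0 (Int.negSucc m + 1)) := by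
  cases m with
  | zero =>
    have e : Int.negSucc 0 + 1 = Int.ofNat 0 := by decide
    rw [e]
    rfl
  | succ k =>
    have e : Int.negSucc (k+1) + 1 = Int.negSucc k := rfl
    rw [e]
    show (prevCol n)^[k+2] c0 = prevCol n ((prevCol n)^[k+1] c0)
    rw [Function.iterate_succ_apply']

lemma col_zero (n : ℕ) (c0 : ℕ → ℤ) (h0 : c0 0 = 0) (i : ℤ) : col n c0 i 0 = 0 := by
  cases i with
  | ofNat m =>
    cases m with
    | zero => exact h0
    | succ k => rw [col_ofNat_succ]; exact nextCol_zero _ _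
  | negSucc m =>
    rw [col_negSucc]; exact prevCol_zero _ _

lemma col_top (n : ℕ) (c0 : ℕ → ℤ) (h0 : c0 (n+1) = 0) (i : ℤ) : col n c0 i (n+1) = 0 := by
  cases i with
  | ofNat m =>
    cases m with
    | zero => exact h0
    | succ k => rw [col_ofNat_succ]; exact nextCol_top _ _
  | negSucc m =>
    rw [col_negSucc]; exact prevCol_top _ _

lemma col_rec (n : ℕ) (c0 : ℕ → ℤ) (i : ℤ) (j : ℕ) (h1 : 1 ≤ j) (h2 : j ≤ n) :
    col n c0 i j + col n c0 (i+1) j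
      = max (col n c0 (i+1) (j-1) + col n c0 i (j+1)) 0 := by
  cases i with
  | ofNat m =>
    have e : Int.ofNat m + 1 = Int.ofNat (m+1) := rfl
    rw [e, col_ofNat_succ]
    exact next_rec n _ j h1 h2
  | negSucc m =>
    rw [col_negSucc]
    exact prev_rec n _ j h1 h2

end TropFriezeAux

open TropFriezeAux in
/-- Tropical friezes of type `A_n` are in bijection with `ℤ^n` via the diagonal
values at `i = 0`. -/
theorem tropical_frieze_bijection_with_Zn (n : ℕ) (a : ℤ → ℤ) :
    (∃ f : ℤ × ℤ → ℤ,
      (∀ i : ℤ, f (i, 0) = 0) ∧ (∀ i : ℤ, f (i, (n : ℤ) + 1) = 0) ∧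
      (∀ i j : ℤ, 1 ≤ j → j ≤ (n : ℤ) →
        f (i, j) + f (i + 1, j) = max (f (i + 1, j - 1) + f (i, j + 1)) 0) ∧
      (∀ j : ℤ, 1 ≤ j → j ≤ (n : ℤ) → f (0, j) = a j)) ∧
    (∀ f g : ℤ × ℤ → ℤ,
      ((∀ i : ℤ, f (i, 0) = 0) ∧ (∀ i : ℤ, f (i, (n : ℤ) + 1) = 0) ∧
       (∀ i j : ℤ, 1 ≤ j → j ≤ (n : ℤ) →
         f (i, j) + f (i + 1, j) = max (f (i + 1, j - 1) + f (i, j + 1)) 0) ∧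
       (∀ j : ℤ, 1 ≤ j → j ≤ (n : ℤ) → f (0, j) = a j)) →
      ((∀ i : ℤ, g (i, 0) = 0) ∧ (∀ i : ℤ, g (i, (n : ℤ) + 1) = 0) ∧
       (∀ i j : ℤ, 1 ≤ j → j ≤ (n : ℤ) →
         g (i, j) + g (i + 1, j) = max (g (i + 1, j - 1) + g (i, j + 1)) 0) ∧
       (∀ j : ℤ, 1 ≤ j → j ≤ (n : ℤ) → g (0, j) = a j)) →
      ∀ i j : ℤ, 1 ≤ j → j ≤ (n : ℤ) → f (i, j) = g (i, j)) := by
  constructor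
  · -- existence
    set c0 : ℕ → ℤ := fun jn => if 1 ≤ jn ∧ jn ≤ n then a (jn : ℤ) else 0 with hc0
    have hc00 : c0 0 = 0 := by simp [hc0]
    have hc0top : c0 (n+1) = 0 := by simp [hc0]
    refine ⟨fun p => if 0 ≤ p.2 then col n c0 p.1 p.2.toNat else 0, ?_, ?_, ?_, ?_⟩
    · intro i
      simp only [if_pos le_rfl, Int.toNat_zero]
      exact col_zero n c0 hc00 i
    · intro i
      have h : (0:ℤ) ≤ (n:ℤ) + 1 := by positivity
      simp only [if_pos h]
      have e : ((n:ℤ)+1).toNat = n+1 := by omega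
      rw [e]
      exact col_top n c0 hc0top i
    · intro i j h1 h2
      have p1 : (0:ℤ) ≤ j := by omega
      have p2 : (0:ℤ) ≤ j - 1 := by omega
      have p3 : (0:ℤ) ≤ j + 1 := by omega
      simp only [if_pos p1, if_pos p2, if_pos p3]
      have e1 : (j-1).toNat = j.toNat - 1 := by omega
      have e2 : (j+1).toNat = j.toNat + 1 := by omega
      rw [e1, e2]
      exact col_rec n c0 i j.toNat (by omega) (by omega)
    · intro j h1 h2
      have p1 : (0:ℤ) ≤ j := by omega
      simp only [if_pos p1]
      have : col n c0 0 j.toNat = c0 j.toNat := rfl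
      rw [this, hc0]
      simp only []
      rw [if_pos (⟨by omega, by omega⟩ : 1 ≤ j.toNat ∧ j.toNat ≤ n)]
      congr 1
      omega
  · -- uniqueness
    rintro f g ⟨hf1, hf2, hf3, hf4⟩ ⟨hg1, hg2, hg3, hg4⟩
    have key : ∀ i : ℤ, ∀ jn : ℕ, jn ≤ n+1 → f (i, (jn:ℤ)) = g (i, (jn:ℤ)) := by
      intro i
      induction i using Int.induction_on with
      | zero =>
        intro jn hjn
        rcases Nat.eq_zero_or_pos jn with h0 | h0
        · subst h0
          simpa using (hf1 0).trans (hg1 0).symm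
        · rcases eq_or_lt_of_le hjn with htop | hlt
          · have e : ((jn:ℤ)) = (n:ℤ) + 1 := by omega
            rw [e]
            exact (hf2 0).trans (hg2 0).symm
          · have h1 : (1:ℤ) ≤ (jn:ℤ) := by omega
            have h2 : ((jn:ℤ)) ≤ (n:ℤ) := by omega
            rw [hf4 _ h1 h2, hg4 _ h1 h2]
      | succ i ih =>
        intro jn
        induction jn with
        | zero =>
          intro _
          simpa using (hf1 _).trans (hg1 _).symm
        | succ k ihk =>
          intro hk
          rcases eq_or_lt_of_le hk with htop | hlt
          · have e : ((k+1:ℕ):ℤ) = (n:ℤ) + 1 := by omega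
            rw [e]
            exact (hf2 _).trans (hg2 _).symm
          · have hkn : k + 1 ≤ n := by omega
            have h1 : (1:ℤ) ≤ ((k+1:ℕ):ℤ) := by omega
            have h2 : (((k+1:ℕ)):ℤ) ≤ (n:ℤ) := by omega
            have hrf := hf3 (i:ℤ) ((k+1:ℕ):ℤ) h1 h2
            have hrg := hg3 (i:ℤ) ((k+1:ℕ):ℤ) h1 h2
            have e1 : ((k+1:ℕ):ℤ) - 1 = ((k:ℕ):ℤ) := by omega
            have e2 : ((k+1:ℕ):ℤ) + 1 = ((k+2:ℕ):ℤ) := by omega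
            rw [e1, e2] at hrf hrg
            have q1 := ih (k+1) (by omega)
            have q2 := ih (k+2) (by omega)
            have q3 := ihk (by omega)
            rw [q1, q2, q3] at hrf
            omega
      | pred i ih =>
        have claim : ∀ k : ℕ, ∀ jn : ℕ, jn + k = n + 1 →
            f (-(i:ℤ) - 1, (jn:ℤ)) = g (-(i:ℤ) - 1, (jn:ℤ)) := by
          intro k
          induction k with
          | zero =>
            intro jn hjn
            have e : ((jn:ℤ)) = (n:ℤ) + 1 := by omega
            rw [e]
            exact (hf2 _).trans (hg2 _).symm
          | succ k' ihk =>
            intro jn hjn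
            rcases Nat.eq_zero_or_pos jn with h0 | h0
            · subst h0
              simpa using (hf1 _).trans (hg1 _).symm
            · have h1 : (1:ℤ) ≤ (jn:ℤ) := by omega
              have h2 : ((jn:ℤ)) ≤ (n:ℤ) := by omega
              have hrf := hf3 (-(i:ℤ) - 1) (jn:ℤ) h1 h2
              have hrg := hg3 (-(i:ℤ) - 1) (jn:ℤ) h1 h2
              have e0 : (-(i:ℤ) - 1) + 1 = -(i:ℤ) := by ring
              have e1 : ((jn:ℤ)) - 1 = ((jn-1:ℕ):ℤ) := by omega
              have e2 : ((jn:ℤ)) + 1 = ((jn+1:ℕ):ℤ) := by omega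
              rw [e0, e1, e2] at hrf hrg
              have q1 := ih jn (by omega)
              have q2 := ih (jn-1) (by omega)
              have q3 := ihk (jn+1) (by omega)
              rw [q1, q2, q3] at hrf
              omega
        intro jn hjn
        exact claim (n+1-jn) jn (by omega)
    intro i j h1 h2
    have e : j = ((j.toNat : ℕ) : ℤ) := by omega
    rw [e]
    exact key i j.toNat (by omega)
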